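/- Let f : ℝ → ℝ be continuous and not a polynomial function. Then for every GML formula φ over Π and every n ≥ 1, there exists a simple Sum-GNN with activation function f that accepts a pointed Π-labeled graph (G,v) with at most n vertices if and only if G,v ⊨ φ. -/

import Mathlib

open scoped Classical

/-- A `α`-labeled finite directed graph. -/
structure LabeledGraph (α : Type) : Type 1 where
  V : Type
  [fintypeV : Fintype V]
  adj : V → V → Prop
  label : V → α → Prop

attribute [instance] LabeledGraph.fintypeV

namespace LabeledGraph

variable {α : Type}

/-- The neighborhood (set of successors) of a vertex. -/
def nbhd (G : LabeledGraph α) (v : G.V) : Set G.V := {u | G.adj v u}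

/-- The neighborhood of a vertex, as a finset. -/
noncomputable def nbhdFinset (G : LabeledGraph α) (v : G.V) : Finset G.V :=
  Finset.univ.filter (fun u => G.adj v u)

/-- The `c`-scaling of a graph: each vertex is multiplied `c` times. -/
def scale (G : LabeledGraph α) (c : ℕ) : LabeledGraph α where
  V := G.V × Fin c
  adj := fun p q => G.adj p.1 q.1
  label := fun p => G.label p.1

end LabeledGraph

/-- Formulas of modal logic ML. -/
inductive ML (α : Type) : Type where
  | atom : α → ML α
  | neg  : ML α → ML α
  | or   : ML α → ML α → ML α
  | dia  : ML α → ML α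

/-- Satisfaction for ML. -/
def ML.sat {α : Type} (G : LabeledGraph α) : ML α → G.V → Prop
  | .atom p, v => G.label v p
  | .neg φ, v => ¬ ML.sat G φ v
  | .or φ ψ, v => ML.sat G φ v ∨ ML.sat G ψ v
  | .dia φ, v => ∃ u, G.adj v u ∧ ML.sat G φ u

/-- Formulas of graded modal logic GML. -/
inductive GML (α : Type) : Type where
  | atom : α → GML α
  | neg  : GML α → GML α
  | or   : GML α → GML α → GML α
  | dia  : ℕ → GML α → GML α

/-- Satisfaction for GML: `dia n φ` is `◊^{≥n} φ`. -/
def GML.sat {α : Type} (G : LabeledGraph α) : GML α → G.V → Prop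
  | .atom p, v => G.label v p
  | .neg φ, v => ¬ GML.sat G φ v
  | .or φ ψ, v => GML.sat G φ v ∨ GML.sat G ψ v
  | .dia n φ, v => n ≤ {u | G.adj v u ∧ GML.sat G φ u}.ncard

/-- Formulas of ratio modal logic RML; diamonds carry a ratio `r ∈ [0,1]`. -/
inductive RML (α : Type) : Type where
  | atom  : α → RML α
  | neg   : RML α → RML α
  | or    : RML α → RML α → RML α
  | diaGe : Set.Icc (0:ℝ) 1 → RML α → RML α
  | diaGt : Set.Icc (0:ℝ) 1 → RML α → RML α

/-- Satisfaction for RML. If a vertex has no successors then `◊^{≥r}φ`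
holds and `◊^{>r}φ` fails; otherwise the fraction of successors satisfying
`φ` is compared with `r`. -/
noncomputable def RML.sat {α : Type} (G : LabeledGraph α) : RML α → G.V → Prop
  | .atom p, v => G.label v p
  | .neg φ, v => ¬ RML.sat G φ v
  | .or φ ψ, v => RML.sat G φ v ∨ RML.sat G ψ v
  | .diaGe r φ, v => (G.nbhd v).Nonempty →
      (r : ℝ) ≤ ({u | G.adj v u ∧ RML.sat G φ u}.ncard : ℝ) / ((G.nbhd v).ncard : ℝ)
  | .diaGt r φ, v => (G.nbhd v).Nonempty ∧
      (r : ℝ) < ({u | G.adj v u ∧ RML.sat G φ u}.ncard : ℝ) / ((G.nbhd v).ncard : ℝ)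

/-- Formulas of AFML[1] (diamond fragment of alternation-free modal logic). -/
inductive AFML1 (α : Type) : Type where
  | atom   : α → AFML1 α
  | natom  : α → AFML1 α
  | boxBot : AFML1 α
  | and    : AFML1 α → AFML1 α → AFML1 α
  | or     : AFML1 α → AFML1 α → AFML1 α
  | dia    : AFML1 α → AFML1 α

/-- Satisfaction for AFML[1]. -/
def AFML1.sat {α : Type} (G : LabeledGraph α) : AFML1 α → G.V → Prop
  | .atom p, v => G.label v p
  | .natom p, v => ¬ G.label v p
  | .boxBot, v => ∀ u, ¬ G.adj v u
  | .and φ ψ, v => AFML1.sat G φ v ∧ AFML1.sat G ψ v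
  | .or φ ψ, v => AFML1.sat G φ v ∨ AFML1.sat G ψ v
  | .dia φ, v => ∃ u, G.adj v u ∧ AFML1.sat G φ u

/-- Modal depth of an AFML[1] formula. -/
def AFML1.depth {α : Type} : AFML1 α → ℕ
  | .atom _ => 0
  | .natom _ => 0
  | .boxBot => 1
  | .and φ ψ => max (AFML1.depth φ) (AFML1.depth ψ)
  | .or φ ψ => max (AFML1.depth φ) (AFML1.depth ψ)
  | .dia φ => AFML1.depth φ + 1

/-- Formulas of AFML[2] (box fragment of alternation-free modal logic). -/
inductive AFML2 (α : Type) : Type where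
  | atom   : α → AFML2 α
  | natom  : α → AFML2 α
  | diaTop : AFML2 α
  | and    : AFML2 α → AFML2 α → AFML2 α
  | or     : AFML2 α → AFML2 α → AFML2 α
  | box    : AFML2 α → AFML2 α

/-- Satisfaction for AFML[2]. -/
def AFML2.sat {α : Type} (G : LabeledGraph α) : AFML2 α → G.V → Prop
  | .atom p, v => G.label v p
  | .natom p, v => ¬ G.label v p
  | .diaTop, v => ∃ u, G.adj v u
  | .and φ ψ, v => AFML2.sat G φ v ∧ AFML2.sat G ψ v
  | .or φ ψ, v => AFML2.sat G φ v ∨ AFML2.sat G ψ v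
  | .box φ, v => ∀ u, G.adj v u → AFML2.sat G φ u

/-- Alternation-free modal logic: AFML[1] formulas together with AFML[2] formulas. -/
def AFML (α : Type) : Type := AFML1 α ⊕ AFML2 α

/-- Satisfaction for AFML. -/
def AFML.sat {α : Type} (G : LabeledGraph α) : AFML α → G.V → Prop
  | .inl φ => AFML1.sat G φ
  | .inr φ => AFML2.sat G φ

/-- The three aggregation functions. -/
inductive Agg : Type where
  | sum : Agg
  | mean : Agg
  | max : Agg

/-- Apply an aggregation function componentwise to the (multiset of) values of `x`
over the finset `s`; empty aggregation yields `0` (so mean of the empty multiset is `0`). -/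
noncomputable def Agg.apply {V : Type} : Agg → Finset V → (V → ℝ) → ℝ
  | .sum, s, x => ∑ u ∈ s, x u
  | .mean, s, x => (∑ u ∈ s, x u) / (s.card : ℝ)
  | .max, s, x => if h : s.Nonempty then s.sup' h x else 0

/-- A GNN: `L` layers, dimensions `δ 0, …, δ L` with `δ 0 = |α|`,
combination functions `com ℓ : ℝ^{δ ℓ} × ℝ^{δ ℓ} → ℝ^{δ (ℓ+1)}` for `ℓ < L`,
and a threshold classification function `CLS(x) = 1 iff x_clsIdx ∼ clsThr`
where `∼` is `>` if `clsStrict` and `≥` otherwise. -/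
structure GNN (α : Type) [Fintype α] : Type where
  L : ℕ
  δ : ℕ → ℕ
  hδ0 : δ 0 = Fintype.card α
  com : (ℓ : ℕ) → (Fin (δ ℓ) → ℝ) → (Fin (δ ℓ) → ℝ) → (Fin (δ (ℓ+1)) → ℝ)
  clsIdx : Fin (δ L)
  clsStrict : Bool
  clsThr : ℝ

/-- The feature vector computed by a GNN (with aggregation `agg`) at layer `ℓ`
at vertex `v` of graph `G`. Layer 0 yields the 0/1 indicator vector of the labels. -/
noncomputable def GNN.feat {α : Type} [Fintype α] (𝒢 : GNN α) (agg : Agg)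
    (G : LabeledGraph α) : (ℓ : ℕ) → G.V → Fin (𝒢.δ ℓ) → ℝ
  | 0, v, i => if G.label v ((Fintype.equivFin α).symm (Fin.cast 𝒢.hδ0 i)) then 1 else 0
  | (ℓ+1), v, i =>
      𝒢.com ℓ (𝒢.feat agg G ℓ v)
        (fun j => agg.apply (G.nbhdFinset v) (fun u => 𝒢.feat agg G ℓ u j)) i

/-- The GNN accepts a pointed graph iff the classification function outputs 1 on
the final feature vector. -/
noncomputable def GNN.accepts {α : Type} [Fintype α] (𝒢 : GNN α) (agg : Agg)
    (G : LabeledGraph α) (v : G.V) : Prop :=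
  if 𝒢.clsStrict then 𝒢.clsThr < 𝒢.feat agg G 𝒢.L v 𝒢.clsIdx
  else 𝒢.clsThr ≤ 𝒢.feat agg G 𝒢.L v 𝒢.clsIdx

/-- A GNN is simple with activation function `f` if each combination function
has the form `COM(x_v, x_a) = f(x_v·C + x_a·A + b)` (componentwise `f`). -/
def GNN.IsSimple {α : Type} [Fintype α] (𝒢 : GNN α) (f : ℝ → ℝ) : Prop :=
  ∀ ℓ < 𝒢.L, ∃ (C A : Fin (𝒢.δ ℓ) → Fin (𝒢.δ (ℓ+1)) → ℝ) (b : Fin (𝒢.δ (ℓ+1)) → ℝ),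
    ∀ (xv xa : Fin (𝒢.δ ℓ) → ℝ) (i : Fin (𝒢.δ (ℓ+1))),
      𝒢.com ℓ xv xa i = f ((∑ j, xv j * C j i) + (∑ j, xa j * A j i) + b i)

/-- All combination functions of the GNN are continuous. -/
def GNN.HasContinuousCom {α : Type} [Fintype α] (𝒢 : GNN α) : Prop :=
  ∀ ℓ < 𝒢.L,
    Continuous (fun p : (Fin (𝒢.δ ℓ) → ℝ) × (Fin (𝒢.δ ℓ) → ℝ) => 𝒢.com ℓ p.1 p.2)

/-- Truncated ReLU. -/
noncomputable def reluStar : ℝ → ℝ := fun x => min (max 0 x) 1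

/-- ReLU. -/
noncomputable def relu : ℝ → ℝ := fun x => max 0 x

/-- Two pointed graphs have the same vertex labels at their distinguished vertices. -/
def labelsEq {α : Type} (G1 G2 : LabeledGraph α) (v1 : G1.V) (v2 : G2.V) : Prop :=
  ∀ p, G1.label v1 p ↔ G2.label v2 p

/-- Spoiler wins the `ℓ`-round ML game on `((G1,v1),(G2,v2))`. -/
def spoilerWinsML {α : Type} (G1 G2 : LabeledGraph α) : ℕ → G1.V → G2.V → Prop
  | 0, v1, v2 => ¬ labelsEq G1 G2 v1 v2
  | (ℓ+1), v1, v2 =>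
      ¬ labelsEq G1 G2 v1 v2
      ∨ (∃ u1, G1.adj v1 u1 ∧ ∀ u2, G2.adj v2 u2 → spoilerWinsML G1 G2 ℓ u1 u2)
      ∨ (∃ u2, G2.adj v2 u2 ∧ ∀ u1, G1.adj v1 u1 → spoilerWinsML G1 G2 ℓ u1 u2)

/-- Spoiler wins the `ℓ`-round AFML[1] game on `((G1,v1),(G2,v2))`. -/
def spoilerWinsAFML1 {α : Type} (G1 G2 : LabeledGraph α) : ℕ → G1.V → G2.V → Prop
  | 0, v1, v2 => ¬ labelsEq G1 G2 v1 v2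
  | (ℓ+1), v1, v2 =>
      ¬ labelsEq G1 G2 v1 v2
      ∨ ((∀ u, ¬ G1.adj v1 u) ∧ (∃ u, G2.adj v2 u))
      ∨ (∃ u1, G1.adj v1 u1 ∧ ∀ u2, G2.adj v2 u2 → spoilerWinsAFML1 G1 G2 ℓ u1 u2)

/-- Spoiler wins the `ℓ`-round GML game with counting bound `c` on `((G1,v1),(G2,v2))`. -/
def spoilerWinsGML {α : Type} (c : ℕ) (G1 G2 : LabeledGraph α) : ℕ → G1.V → G2.V → Prop
  | 0, v1, v2 => ¬ labelsEq G1 G2 v1 v2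
  | (ℓ+1), v1, v2 =>
      ¬ labelsEq G1 G2 v1 v2
      ∨ (∃ U1 : Finset G1.V, (∀ u ∈ U1, G1.adj v1 u) ∧ 0 < U1.card ∧ U1.card ≤ c ∧
          ((G2.nbhd v2).ncard < U1.card ∨
            ∀ U2 : Finset G2.V, (∀ u ∈ U2, G2.adj v2 u) → U2.card = U1.card →
              ∃ u2 ∈ U2, ∀ u1 ∈ U1, spoilerWinsGML c G1 G2 ℓ u1 u2))
      ∨ (∃ U2 : Finset G2.V, (∀ u ∈ U2, G2.adj v2 u) ∧ 0 < U2.card ∧ U2.card ≤ c ∧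
          ((G1.nbhd v1).ncard < U2.card ∨
            ∀ U1 : Finset G1.V, (∀ u ∈ U1, G1.adj v1 u) → U1.card = U2.card →
              ∃ u1 ∈ U1, ∀ u2 ∈ U2, spoilerWinsGML c G1 G2 ℓ u1 u2))

/-- The ratio `1/2` as an element of `[0,1]`. -/
noncomputable def half : Set.Icc (0:ℝ) 1 := ⟨1/2, by norm_num⟩

open scoped ContDiff

section KeyLemma

/-- A smooth function whose `d`-th iterated derivative vanishes is polynomial of degree ≤ d. -/
lemma poly_of_iteratedDeriv_eq_zero {g : ℝ → ℝ} (hg : ContDiff ℝ ∞ g) :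
    ∀ {d : ℕ}, (∀ t, iteratedDeriv d g t = 0) →
      ∃ p : Polynomial ℝ, p.natDegree ≤ d ∧ ∀ t, g t = p.eval t := by
  intro d
  induction d generalizing g with
  | zero =>
      intro h
      exact ⟨0, le_rfl, fun t => by simpa using h t⟩
  | succ d ih =>
      intro h
      have hg' : ContDiff ℝ ∞ (deriv g) := by
        simpa using hg.iterate_deriv 1
      have h' : ∀ t, iteratedDeriv d (deriv g) t = 0 := by
        intro t
        have := h t
        rwa [iteratedDeriv_succ'] at this
      obtain ⟨p, hpd, hp⟩ := ih hg' h'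
      -- antiderivative of p
      set q : Polynomial ℝ :=
        ∑ i ∈ Finset.range (p.natDegree + 1),
          Polynomial.C (p.coeff i / (i + 1)) * Polynomial.X ^ (i + 1) with hq
      have hqder : q.derivative = p := by
        rw [hq, Polynomial.derivative_sum]
        have : ∀ i ∈ Finset.range (p.natDegree + 1),
            (Polynomial.C (p.coeff i / (i + 1)) * Polynomial.X ^ (i + 1)).derivative
              = Polynomial.C (p.coeff i) * Polynomial.X ^ i := by
          intro i _
          rw [Polynomial.derivative_C_mul_X_pow]
          congr 1
          · congr 1
            push_cast
            field_simp
        rw [Finset.sum_congr rfl this]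
        conv_rhs => rw [Polynomial.as_sum_range' p (p.natDegree + 1) (Nat.lt_succ_self _)]
        simp [Polynomial.C_mul_X_pow_eq_monomial]
      have hqdeg : q.natDegree ≤ d + 1 := by
        apply Polynomial.natDegree_sum_le_of_forall_le
        intro i hi
        refine le_trans (Polynomial.natDegree_C_mul_X_pow_le _ _) ?_
        have := Finset.mem_range.1 hi
        omega
      -- g - eval q has zero derivative
      have hqdiff : Differentiable ℝ fun t => Polynomial.eval t q := q.differentiable
      have hgd : Differentiable ℝ g := hg.differentiable (by simp)
      have hderiv : ∀ t, deriv (fun t => g t - Polynomial.eval t q) t = 0 := by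
        intro t
        rw [deriv_fun_sub (hgd t) (hqdiff t), Polynomial.deriv, hqder, ← hp t]
        ring
      have hconst : ∀ t, g t - Polynomial.eval t q = g 0 - Polynomial.eval 0 q := by
        intro t
        exact is_const_of_deriv_eq_zero (hgd.sub hqdiff) hderiv t 0
      refine ⟨q + Polynomial.C (g 0 - Polynomial.eval 0 q), ?_, ?_⟩
      · refine le_trans (Polynomial.natDegree_add_le _ _) ?_
        simp [hqdeg]
      · intro t
        have := hconst t
        simp only [Polynomial.eval_add, Polynomial.eval_C]
        linarith

end KeyLemma

section Ann

lemma ann_deriv {m : ℕ} (x d : Fin m → ℝ) {G : ℝ → ℝ} (hG : Differentiable ℝ G)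
    (h : ∀ w b : ℝ, ∑ j, d j * G (w * x j + b) = 0) (c : ℝ) :
    ∀ w b : ℝ, ∑ j, d j * ((x j - c) * deriv G (w * x j + b)) = 0 := by
  intro w b
  have hb : HasDerivAt (fun b : ℝ => ∑ j, d j * G (w * x j + b))
      (∑ j, d j * deriv G (w * x j + b)) b := by
    apply HasDerivAt.fun_sum
    intro j _
    have h1 : HasDerivAt (fun b : ℝ => w * x j + b) 1 b := by
      simpa using (hasDerivAt_id b).const_add (w * x j)
    have h2 := (hG (w * x j + b)).hasDerivAt.comp b h1
    have h3 := h2.const_mul (d j)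
    simpa [Function.comp] using h3
  have hb0 : HasDerivAt (fun b : ℝ => ∑ j, d j * G (w * x j + b)) 0 b := by
    have he : (fun b : ℝ => ∑ j, d j * G (w * x j + b)) = fun _ => (0:ℝ) := funext (h w)
    rw [he]; exact hasDerivAt_const b 0
  have Hb := hb.unique hb0
  have hw : HasDerivAt (fun w : ℝ => ∑ j, d j * G (w * x j + b))
      (∑ j, d j * (x j * deriv G (w * x j + b))) w := by
    apply HasDerivAt.fun_sum
    intro j _
    have h1 : HasDerivAt (fun w : ℝ => w * x j + b) (x j) w := by
      simpa using ((hasDerivAt_id w).mul_const (x j)).add_const b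
    have h2 := (hG (w * x j + b)).hasDerivAt.comp w h1
    have h3 := h2.const_mul (d j)
    have : d j * (deriv G (w * x j + b) * x j) = d j * (x j * deriv G (w * x j + b)) := by ring
    simpa [Function.comp, this] using h3
  have hw0 : HasDerivAt (fun w : ℝ => ∑ j, d j * G (w * x j + b)) 0 w := by
    have he : (fun w : ℝ => ∑ j, d j * G (w * x j + b)) = fun _ => (0:ℝ) := by
      funext w'; exact h w' b
    rw [he]; exact hasDerivAt_const w 0
  have Hw := hw.unique hw0
  have : ∑ j, d j * ((x j - c) * deriv G (w * x j + b))
      = (∑ j, d j * (x j * deriv G (w * x j + b))) - c * ∑ j, d j * deriv G (w * x j + b) := by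
    rw [Finset.mul_sum, ← Finset.sum_sub_distrib]
    exact Finset.sum_congr rfl fun j _ => by ring
  rw [this, Hb, Hw]
  ring

lemma ann_iterated {m : ℕ} (x lam : Fin m → ℝ) {g : ℝ → ℝ} (hg : ContDiff ℝ ∞ g)
    (h0 : ∀ w b : ℝ, ∑ j, lam j * g (w * x j + b) = 0) (T : Finset (Fin m)) :
    ∀ w b : ℝ, ∑ j, lam j * ((∏ j' ∈ T, (x j - x j')) * iteratedDeriv T.card g (w * x j + b)) = 0 := by
  induction T using Finset.induction with
  | empty => simpa using h0
  | @insert j₀ T hj₀ ih =>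
      intro w b
      have hGd : Differentiable ℝ (iteratedDeriv T.card g) := by
        rw [iteratedDeriv_eq_iterate]
        exact (hg.iterate_deriv T.card).differentiable (by simp)
      have ih' : ∀ w b : ℝ, ∑ j, (fun j => lam j * ∏ j' ∈ T, (x j - x j')) j
          * iteratedDeriv T.card g (w * x j + b) = 0 := by
        intro w b
        have := ih w b
        rw [← this]
        exact Finset.sum_congr rfl fun j _ => by ring
      have H := ann_deriv x (fun j => lam j * ∏ j' ∈ T, (x j - x j')) hGd ih' (x j₀) w b
      rw [Finset.card_insert_of_notMem hj₀]
      rw [← H]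
      refine Finset.sum_congr rfl fun j _ => ?_
      rw [Finset.prod_insert hj₀, iteratedDeriv_succ]
      ring

lemma ann_smooth_poly {m : ℕ} (x lam : Fin m → ℝ) (hx : Function.Injective x) {g : ℝ → ℝ}
    (hg : ContDiff ℝ ∞ g) (j₀ : Fin m) (hl : lam j₀ ≠ 0)
    (h0 : ∀ w b : ℝ, ∑ j, lam j * g (w * x j + b) = 0) :
    ∃ p : Polynomial ℝ, p.natDegree ≤ m - 1 ∧ ∀ t, g t = p.eval t := by
  have H := ann_iterated x lam hg h0 (Finset.univ.erase j₀)
  have hcard : (Finset.univ.erase j₀).card = m - 1 := by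
    simp [Finset.card_erase_of_mem]
  have hz : ∀ t, iteratedDeriv (m - 1) g t = 0 := by
    intro t
    have H1 := H 0 t
    rw [Finset.sum_eq_single j₀] at H1
    · rw [hcard] at H1
      have hprod : (∏ j' ∈ Finset.univ.erase j₀, (x j₀ - x j')) ≠ 0 := by
        rw [Finset.prod_ne_zero_iff]
        intro j' hj'
        have : j' ≠ j₀ := (Finset.mem_erase.1 hj').1
        exact sub_ne_zero.2 fun he => this (hx he.symm)
      have h2 : iteratedDeriv (m - 1) g (0 * x j₀ + t) = 0 := by
        rcases mul_eq_zero.1 H1 with h | h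
        · exact absurd h hl
        · rcases mul_eq_zero.1 h with h | h
          · exact absurd h hprod
          · exact h
      simpa using h2
    · intro j _ hj
      have hjmem : j ∈ Finset.univ.erase j₀ := Finset.mem_erase.2 ⟨hj, Finset.mem_univ j⟩
      rw [Finset.prod_eq_zero hjmem (by ring)]
      ring
    · intro h; exact absurd (Finset.mem_univ j₀) h
  exact poly_of_iteratedDeriv_eq_zero hg hz

end Ann

section Moll

open MeasureTheory Filter Convolution

lemma ann_cont_poly {m : ℕ} (x lam : Fin m → ℝ) (hx : Function.Injective x) {f : ℝ → ℝ}
    (hf : Continuous f) (j₀ : Fin m) (hl : lam j₀ ≠ 0)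
    (h0 : ∀ w b : ℝ, ∑ j, lam j * f (w * x j + b) = 0) :
    ∃ p : Polynomial ℝ, ∀ t, f t = p.eval t := by
  classical
  let φ : ℕ → ContDiffBump (0:ℝ) := fun k =>
    ⟨1/(k+1), 2*(1/(k+1)), by positivity, by
      have : (0:ℝ) < 1/(k+1) := by positivity
      linarith⟩
  let g : ℕ → ℝ → ℝ := fun k => (φ k).normed volume ⋆[ContinuousLinearMap.lsmul ℝ ℝ, volume] f
  have hgs : ∀ k, ContDiff ℝ ∞ (g k) := fun k =>
    HasCompactSupport.contDiff_convolution_left _ (φ k).hasCompactSupport_normed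
      (φ k).contDiff_normed hf.locallyIntegrable
  have hint : ∀ k (c : ℝ), Integrable (fun s => (φ k).normed volume s * f (c - s)) volume := by
    intro k c
    apply Continuous.integrable_of_hasCompactSupport
    · exact ((φ k).contDiff_normed (n := 0)).continuous.mul (hf.comp (by continuity))
    · exact ((φ k).hasCompactSupport_normed).mul_right
  have hann : ∀ k (w b : ℝ), ∑ j, lam j * g k (w * x j + b) = 0 := by
    intro k w b
    have e1 : ∀ j : Fin m, lam j * g k (w * x j + b)
        = ∫ s, lam j * ((φ k).normed volume s * f (w * x j + b - s)) := by
      intro j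
      rw [MeasureTheory.integral_const_mul]
      congr 1
    rw [Finset.sum_congr rfl fun j _ => e1 j, ← MeasureTheory.integral_finset_sum]
    · have e2 : ∀ s : ℝ, (∑ j, lam j * ((φ k).normed volume s * f (w * x j + b - s))) = 0 := by
        intro s
        have e3 : ∀ j : Fin m, lam j * ((φ k).normed volume s * f (w * x j + b - s))
            = (φ k).normed volume s * (lam j * f (w * x j + (b - s))) := by
          intro j
          have harg : w * x j + b - s = w * x j + (b - s) := by ring
          rw [harg]; ring
        rw [Finset.sum_congr rfl fun j _ => e3 j, ← Finset.mul_sum, h0 w (b - s), mul_zero]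
      simp only [e2, MeasureTheory.integral_zero]
    · intro j _
      exact (hint k _).const_mul _
  have hconv : ∀ t : ℝ, Tendsto (fun k => g k t) atTop (nhds (f t)) := by
    intro t
    apply ContDiffBump.convolution_tendsto_right_of_continuous (μ := volume)
      (φ := φ) (l := atTop) ?_ hf t
    have h1 := tendsto_one_div_add_atTop_nhds_zero_nat (𝕜 := ℝ)
    have h2 := h1.const_mul (2:ℝ)
    rw [mul_zero] at h2
    exact h2
  have hm : 0 < m := by
    rcases Nat.eq_zero_or_pos m with h | h
    · exact absurd (h ▸ j₀).2 (by omega)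
    · exact h
  have hpoly : ∀ k, ∃ p : Polynomial ℝ, p.natDegree ≤ m - 1 ∧ ∀ t, g k t = p.eval t :=
    fun k => ann_smooth_poly x lam hx (hgs k) j₀ hl (hann k)
  choose P hP1 hP2 using hpoly
  have hinj : Set.InjOn (Nat.cast : ℕ → ℝ) (Finset.range m) := Nat.cast_injective.injOn
  have hdeg : ∀ k, (P k).degree < (Finset.range m).card := by
    intro k
    refine lt_of_le_of_lt (Polynomial.degree_le_natDegree) ?_
    rw [Finset.card_range]
    exact_mod_cast lt_of_le_of_lt (Nat.cast_le.2 (hP1 k)) (Nat.cast_lt.2 (by omega))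
  have heval : ∀ (r : ℕ → ℝ) (t : ℝ),
      (Lagrange.interpolate (Finset.range m) (Nat.cast : ℕ → ℝ) r).eval t
        = ∑ i ∈ Finset.range m, r i * (Lagrange.basis (Finset.range m) (Nat.cast : ℕ → ℝ) i).eval t := by
    intro r t
    rw [Lagrange.interpolate_apply]
    rw [Polynomial.eval_finset_sum]
    exact Finset.sum_congr rfl fun i _ => by simp
  refine ⟨Lagrange.interpolate (Finset.range m) (Nat.cast : ℕ → ℝ) (fun i => f i), fun t => ?_⟩
  have hrep : ∀ k, g k t = ∑ i ∈ Finset.range m,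
      g k i * (Lagrange.basis (Finset.range m) (Nat.cast : ℕ → ℝ) i).eval t := by
    intro k
    have h1 := Lagrange.eq_interpolate (f := P k) hinj (hdeg k)
    have h2 : g k t = (P k).eval t := hP2 k t
    rw [h2]
    conv_lhs => rw [h1]
    rw [heval]
    exact Finset.sum_congr rfl fun i _ => by rw [← hP2 k i]
  have hlim1 : Tendsto (fun k => g k t) atTop
      (nhds (∑ i ∈ Finset.range m, f i * (Lagrange.basis (Finset.range m) (Nat.cast : ℕ → ℝ) i).eval t)) := by
    have := tendsto_finset_sum (Finset.range m)
      (fun i _ => (hconv (i : ℝ)).mul_const ((Lagrange.basis (Finset.range m) (Nat.cast : ℕ → ℝ) i).eval t))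
    simpa only [← hrep] using this
  have := tendsto_nhds_unique (hconv t) hlim1
  rw [this, heval]

end Moll

section Interp

lemma key_interp {f : ℝ → ℝ} (hf : Continuous f)
    (hnp : ¬ ∃ p : Polynomial ℝ, ∀ x, f x = p.eval x)
    (m : ℕ) (x : Fin m → ℝ) (hx : Function.Injective x) (y : Fin m → ℝ) :
    ∃ (N : ℕ) (c w b : Fin N → ℝ), ∀ j, ∑ i, c i * f (w i * x j + b i) = y j := by
  classical
  set Sset : Set (Fin m → ℝ) := {v | ∃ w b : ℝ, v = fun j => f (w * x j + b)} with hSset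
  have hspan : Submodule.span ℝ Sset = ⊤ := by
    by_contra hne
    obtain ⟨ψ, hψ0, hψbot⟩ := Submodule.exists_dual_map_eq_bot_of_lt_top
      (lt_top_iff_ne_top.2 hne) inferInstance
    set lam : Fin m → ℝ := fun j => ψ (fun j' => if j = j' then 1 else 0) with hlam
    have happ : ∀ v : Fin m → ℝ, ψ v = ∑ j, v j * lam j := by
      intro v
      rw [LinearMap.pi_apply_eq_sum_univ]
      exact Finset.sum_congr rfl fun j _ => by rw [smul_eq_mul]
    have hker : ∀ v ∈ Sset, ψ v = 0 := by
      intro v hv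
      have : ψ v ∈ (Submodule.span ℝ Sset).map ψ :=
        Submodule.mem_map_of_mem (Submodule.subset_span hv)
      rw [hψbot] at this
      simpa using this
    have hann : ∀ w b : ℝ, ∑ j, lam j * f (w * x j + b) = 0 := by
      intro w b
      have h1 := hker (fun j => f (w * x j + b)) ⟨w, b, rfl⟩
      rw [happ] at h1
      rw [← h1]
      exact Finset.sum_congr rfl fun j _ => by ring
    have hlamne : ∃ j₀, lam j₀ ≠ 0 := by
      by_contra hall
      push_neg at hall
      apply hψ0
      apply LinearMap.ext
      intro v
      rw [happ]
      simp [hall]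
    obtain ⟨j₀, hj₀⟩ := hlamne
    exact hnp (ann_cont_poly x lam hx hf j₀ hj₀ hann)
  have hy : y ∈ Submodule.span ℝ Sset := by rw [hspan]; trivial
  obtain ⟨N, c, gels, hsum⟩ := Submodule.mem_span_set'.1 hy
  have hch : ∀ i : Fin N, ∃ w b : ℝ, (gels i : Fin m → ℝ) = fun j => f (w * x j + b) :=
    fun i => (gels i).2
  choose w b hwb using hch
  refine ⟨N, c, w, b, fun j => ?_⟩
  have := congrFun hsum j
  rw [← this, Finset.sum_apply]
  refine Finset.sum_congr rfl fun i _ => ?_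
  rw [hwb i]
  simp [mul_comm]

end Interp
namespace Stmt6

def subs {α : Type} : GML α → List (GML α)
  | .atom p => [.atom p]
  | .neg ψ => .neg ψ :: subs ψ
  | .or ψ χ => .or ψ χ :: (subs ψ ++ subs χ)
  | .dia k ψ => .dia k ψ :: subs ψ

def ght {α : Type} : GML α → ℕ
  | .atom _ => 0
  | .neg ψ => ght ψ + 1
  | .or ψ χ => max (ght ψ) (ght χ) + 1
  | .dia _ ψ => ght ψ + 1

lemma self_mem_subs {α : Type} (ψ : GML α) : ψ ∈ subs ψ := by
  cases ψ <;> simp [subs]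

lemma subs_length_pos {α : Type} (φ : GML α) : 0 < (subs φ).length :=
  List.length_pos_iff.2 (List.ne_nil_of_mem (self_mem_subs φ))

lemma subs_neg_mem {α : Type} {φ χ : GML α} (h : GML.neg χ ∈ subs φ) : χ ∈ subs φ := by
  induction φ with
  | atom p => simp [subs] at h
  | neg ψ ih =>
      rcases List.mem_cons.1 h with h | h
      · cases h; exact List.mem_cons.2 (Or.inr (self_mem_subs _))
      · exact List.mem_cons.2 (Or.inr (ih h))
  | or ψ₁ ψ₂ ih₁ ih₂ =>
      rcases List.mem_cons.1 h with h | h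
      · cases h
      · rcases List.mem_append.1 h with h | h
        · exact List.mem_cons.2 (Or.inr (List.mem_append.2 (Or.inl (ih₁ h))))
        · exact List.mem_cons.2 (Or.inr (List.mem_append.2 (Or.inr (ih₂ h))))
  | dia k ψ ih =>
      rcases List.mem_cons.1 h with h | h
      · cases h
      · exact List.mem_cons.2 (Or.inr (ih h))

lemma subs_or_mem {α : Type} {φ χ₁ χ₂ : GML α} (h : GML.or χ₁ χ₂ ∈ subs φ) :
    χ₁ ∈ subs φ ∧ χ₂ ∈ subs φ := by
  induction φ with
  | atom p => simp [subs] at h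
  | neg ψ ih =>
      rcases List.mem_cons.1 h with h | h
      · cases h
      · exact ⟨List.mem_cons.2 (Or.inr (ih h).1), List.mem_cons.2 (Or.inr (ih h).2)⟩
  | or ψ₁ ψ₂ ih₁ ih₂ =>
      rcases List.mem_cons.1 h with h | h
      · cases h
        refine ⟨List.mem_cons.2 (Or.inr (List.mem_append.2 (Or.inl (self_mem_subs _)))),
          List.mem_cons.2 (Or.inr (List.mem_append.2 (Or.inr (self_mem_subs _))))⟩
      · rcases List.mem_append.1 h with h | h
        · exact ⟨List.mem_cons.2 (Or.inr (List.mem_append.2 (Or.inl (ih₁ h).1))),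
            List.mem_cons.2 (Or.inr (List.mem_append.2 (Or.inl (ih₁ h).2)))⟩
        · exact ⟨List.mem_cons.2 (Or.inr (List.mem_append.2 (Or.inr (ih₂ h).1))),
            List.mem_cons.2 (Or.inr (List.mem_append.2 (Or.inr (ih₂ h).2)))⟩
  | dia k ψ ih =>
      rcases List.mem_cons.1 h with h | h
      · cases h
      · exact ⟨List.mem_cons.2 (Or.inr (ih h).1), List.mem_cons.2 (Or.inr (ih h).2)⟩

lemma subs_dia_mem {α : Type} {φ χ : GML α} {k : ℕ} (h : GML.dia k χ ∈ subs φ) : χ ∈ subs φ := by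
  induction φ with
  | atom p => simp [subs] at h
  | neg ψ ih =>
      rcases List.mem_cons.1 h with h | h
      · cases h
      · exact List.mem_cons.2 (Or.inr (ih h))
  | or ψ₁ ψ₂ ih₁ ih₂ =>
      rcases List.mem_cons.1 h with h | h
      · cases h
      · rcases List.mem_append.1 h with h | h
        · exact List.mem_cons.2 (Or.inr (List.mem_append.2 (Or.inl (ih₁ h))))
        · exact List.mem_cons.2 (Or.inr (List.mem_append.2 (Or.inr (ih₂ h))))
  | dia k' ψ ih =>
      rcases List.mem_cons.1 h with h | h
      · cases h; exact List.mem_cons.2 (Or.inr (self_mem_subs _))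
      · exact List.mem_cons.2 (Or.inr (ih h))

/-- The interpolation target for each gadget. -/
def tgt {α : Type} : GML α → ℕ → ℝ
  | .atom _ => fun k => if 1 ≤ k then 1 else 0
  | .neg _ => fun k => if k = 0 then 1 else 0
  | .or _ _ => fun k => if 1 ≤ k then 1 else 0
  | .dia n₀ _ => fun k => if n₀ ≤ k then 1 else 0

end Stmt6
namespace Stmt6

variable {α : Type} [Fintype α]

noncomputable def jdx (φ χ : GML α) : Fin (subs φ).length :=
  if h : χ ∈ subs φ then ⟨(subs φ).idxOf χ, List.idxOf_lt_length_iff.2 h⟩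
  else ⟨0, subs_length_pos φ⟩

lemma get_jdx (φ χ : GML α) (h : χ ∈ subs φ) : (subs φ).get (jdx φ χ) = χ := by
  rw [jdx, dif_pos h]
  simp [List.getElem_idxOf]

/-- Feature index for block `j`, unit `i`. -/
def enc (φ : GML α) (N : ℕ) (j : Fin (subs φ).length) (i : Fin N) :
    Fin ((subs φ).length * N + 1) :=
  (finProdFinEquiv (j, i)).castSucc

/-- Coefficient vector extracting the value of subformula `χ`. -/
noncomputable def cvec (φ : GML α) (N : ℕ) (cP : GML α → Fin N → ℝ) (χ : GML α) :
    Fin ((subs φ).length * N + 1) → ℝ := fun t =>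
  if ht : (t : ℕ) < (subs φ).length * N then
    (fun p : Fin (subs φ).length × Fin N =>
      if p.1 = jdx φ χ then cP χ p.2 else 0) (finProdFinEquiv.symm ⟨(t : ℕ), ht⟩)
  else 0

/-- The value of subformula `χ` encoded in a feature vector. -/
noncomputable def val (φ : GML α) (N : ℕ) (cP : GML α → Fin N → ℝ) (χ : GML α)
    (x : Fin ((subs φ).length * N + 1) → ℝ) : ℝ :=
  ∑ i : Fin N, cP χ i * x (enc φ N (jdx φ χ) i)

lemma sum_cvec (φ : GML α) (N : ℕ) (cP : GML α → Fin N → ℝ) (χ : GML α)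
    (x : Fin ((subs φ).length * N + 1) → ℝ) :
    ∑ t, x t * cvec φ N cP χ t = val φ N cP χ x := by
  classical
  rw [Fin.sum_univ_castSucc]
  have hlast : cvec φ N cP χ (Fin.last ((subs φ).length * N)) = 0 := by
    rw [cvec, dif_neg]
    simp
  rw [hlast, mul_zero, add_zero]
  have h1 : ∀ t : Fin ((subs φ).length * N),
      x t.castSucc * cvec φ N cP χ t.castSucc
        = (fun p : Fin (subs φ).length × Fin N =>
            if p.1 = jdx φ χ then x (enc φ N p.1 p.2) * cP χ p.2 else 0)
            (finProdFinEquiv.symm t) := by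
    intro t
    rw [cvec, dif_pos (by simpa using t.isLt)]
    have ht : (⟨((t.castSucc : Fin _) : ℕ), by simpa using t.isLt⟩ : Fin ((subs φ).length * N)) = t := by
      apply Fin.ext; simp
    rw [ht]
    beta_reduce
    set p := finProdFinEquiv.symm t with hp
    by_cases hc : p.1 = jdx φ χ
    · rw [if_pos hc, if_pos hc]
      have : t.castSucc = enc φ N p.1 p.2 := by
        rw [enc]
        congr 1
        rw [hp]
        exact (Equiv.apply_symm_apply finProdFinEquiv t).symm
      rw [this]
    · rw [if_neg hc, if_neg hc, mul_zero]
  rw [Finset.sum_congr rfl fun t _ => h1 t]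
  rw [Equiv.sum_comp (finProdFinEquiv.symm) (fun p : Fin (subs φ).length × Fin N =>
      if p.1 = jdx φ χ then x (enc φ N p.1 p.2) * cP χ p.2 else 0)]
  rw [Fintype.sum_prod_type]
  rw [Finset.sum_eq_single (jdx φ χ)]
  · rw [val]
    exact Finset.sum_congr rfl fun i _ => by rw [if_pos rfl]; ring
  · intro j _ hj
    exact Finset.sum_eq_zero fun i _ => by rw [if_neg hj]
  · intro h; exact absurd (Finset.mem_univ _) h

end Stmt6
namespace Stmt6

variable {α : Type} [Fintype α]

noncomputable def zvV (φ : GML α) (N : ℕ) (cP : GML α → Fin N → ℝ) :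
    GML α → Fin ((subs φ).length * N + 1) → ℝ
  | .atom p => cvec φ N cP (.atom p)
  | .neg χ => cvec φ N cP χ
  | .or χ₁ χ₂ => fun t => cvec φ N cP χ₁ t + cvec φ N cP χ₂ t
  | .dia _ _ => fun _ => 0

noncomputable def zvA (φ : GML α) (N : ℕ) (cP : GML α → Fin N → ℝ) :
    GML α → Fin ((subs φ).length * N + 1) → ℝ
  | .dia _ χ => cvec φ N cP χ
  | _ => fun _ => 0

noncomputable def zv0 : GML α → Fin (Fintype.card α) → ℝ
  | .atom p => fun t => if t = Fintype.equivFin α p then 1 else 0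
  | _ => fun _ => 0

noncomputable def Cmid (φ : GML α) (N : ℕ) (cP wP : GML α → Fin N → ℝ) (wstar : ℝ) :
    Fin ((subs φ).length * N + 1) → Fin ((subs φ).length * N + 1) → ℝ := fun t u =>
  if hu : (u : ℕ) < (subs φ).length * N then
    wP ((subs φ).get (finProdFinEquiv.symm ⟨(u : ℕ), hu⟩).1)
        (finProdFinEquiv.symm ⟨(u : ℕ), hu⟩).2 *
      zvV φ N cP ((subs φ).get (finProdFinEquiv.symm ⟨(u : ℕ), hu⟩).1) t
  else wstar * cvec φ N cP φ t

noncomputable def Amid (φ : GML α) (N : ℕ) (cP wP : GML α → Fin N → ℝ) :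
    Fin ((subs φ).length * N + 1) → Fin ((subs φ).length * N + 1) → ℝ := fun t u =>
  if hu : (u : ℕ) < (subs φ).length * N then
    wP ((subs φ).get (finProdFinEquiv.symm ⟨(u : ℕ), hu⟩).1)
        (finProdFinEquiv.symm ⟨(u : ℕ), hu⟩).2 *
      zvA φ N cP ((subs φ).get (finProdFinEquiv.symm ⟨(u : ℕ), hu⟩).1) t
  else 0

noncomputable def C0 (φ : GML α) (N : ℕ) (wP : GML α → Fin N → ℝ) :
    Fin (Fintype.card α) → Fin ((subs φ).length * N + 1) → ℝ := fun t u =>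
  if hu : (u : ℕ) < (subs φ).length * N then
    wP ((subs φ).get (finProdFinEquiv.symm ⟨(u : ℕ), hu⟩).1)
        (finProdFinEquiv.symm ⟨(u : ℕ), hu⟩).2 *
      zv0 ((subs φ).get (finProdFinEquiv.symm ⟨(u : ℕ), hu⟩).1) t
  else 0

noncomputable def bmid (φ : GML α) (N : ℕ) (bP : GML α → Fin N → ℝ) (bstar : ℝ) :
    Fin ((subs φ).length * N + 1) → ℝ := fun u =>
  if hu : (u : ℕ) < (subs φ).length * N then
    bP ((subs φ).get (finProdFinEquiv.symm ⟨(u : ℕ), hu⟩).1)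
        (finProdFinEquiv.symm ⟨(u : ℕ), hu⟩).2
  else bstar

noncomputable def scom (f : ℝ → ℝ) {d1 d2 : ℕ} (C A : Fin d1 → Fin d2 → ℝ) (b : Fin d2 → ℝ) :
    (Fin d1 → ℝ) → (Fin d1 → ℝ) → Fin d2 → ℝ :=
  fun xv xa i => f ((∑ j, xv j * C j i) + (∑ j, xa j * A j i) + b i)

noncomputable def net (f : ℝ → ℝ) (φ : GML α) (N : ℕ) (cP wP bP : GML α → Fin N → ℝ)
    (wstar bstar : ℝ) : GNN α where
  L := ght φ + 2
  δ := fun ℓ => match ℓ with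
    | 0 => Fintype.card α
    | _ + 1 => (subs φ).length * N + 1
  hδ0 := rfl
  com := fun ℓ => match ℓ with
    | 0 => scom f (C0 φ N wP) (fun _ _ => 0) (bmid φ N bP bstar)
    | _ + 1 => scom f (Cmid φ N cP wP wstar) (Amid φ N cP wP) (bmid φ N bP bstar)
  clsIdx := Fin.last _
  clsStrict := false
  clsThr := (f bstar + f (wstar + bstar)) / 2

lemma net_isSimple (f : ℝ → ℝ) (φ : GML α) (N : ℕ) (cP wP bP : GML α → Fin N → ℝ)
    (wstar bstar : ℝ) : (net f φ N cP wP bP wstar bstar).IsSimple f := by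
  intro ℓ _
  match ℓ with
  | 0 => exact ⟨C0 φ N wP, fun _ _ => 0, bmid φ N bP bstar, fun _ _ _ => rfl⟩
  | (ℓ' + 1) => exact ⟨Cmid φ N cP wP wstar, Amid φ N cP wP, bmid φ N bP bstar, fun _ _ _ => rfl⟩

/-- The key index computation. -/
lemma symm_enc (φ : GML α) (N : ℕ) (j : Fin (subs φ).length) (i : Fin N)
    (hu : ((enc φ N j i : Fin _) : ℕ) < (subs φ).length * N) :
    finProdFinEquiv.symm (⟨((enc φ N j i : Fin _) : ℕ), hu⟩ : Fin ((subs φ).length * N)) = (j, i) := by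
  have h1 : (⟨((enc φ N j i : Fin _) : ℕ), hu⟩ : Fin ((subs φ).length * N))
      = finProdFinEquiv (j, i) := by
    apply Fin.ext
    simp [enc]
  rw [h1, Equiv.symm_apply_apply]

lemma enc_lt (φ : GML α) (N : ℕ) (j : Fin (subs φ).length) (i : Fin N) :
    ((enc φ N j i : Fin _) : ℕ) < (subs φ).length * N := by
  simpa [enc] using (finProdFinEquiv (j, i)).isLt

lemma scom_mid_block (f : ℝ → ℝ) (φ : GML α) (N : ℕ) (cP wP bP : GML α → Fin N → ℝ)
    (wstar bstar : ℝ) (xv xa : Fin ((subs φ).length * N + 1) → ℝ)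
    (j : Fin (subs φ).length) (i : Fin N) :
    scom f (Cmid φ N cP wP wstar) (Amid φ N cP wP) (bmid φ N bP bstar) xv xa (enc φ N j i)
      = f (wP ((subs φ).get j) i *
          ((∑ t, xv t * zvV φ N cP ((subs φ).get j) t) +
           (∑ t, xa t * zvA φ N cP ((subs φ).get j) t)) + bP ((subs φ).get j) i) := by
  rw [scom]
  congr 1
  have hu := enc_lt φ N j i
  have hC : ∀ t, Cmid φ N cP wP wstar t (enc φ N j i)
      = wP ((subs φ).get j) i * zvV φ N cP ((subs φ).get j) t := by
    intro t; rw [Cmid, dif_pos hu, symm_enc φ N j i hu]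
  have hA : ∀ t, Amid φ N cP wP t (enc φ N j i)
      = wP ((subs φ).get j) i * zvA φ N cP ((subs φ).get j) t := by
    intro t; rw [Amid, dif_pos hu, symm_enc φ N j i hu]
  have hb : bmid φ N bP bstar (enc φ N j i) = bP ((subs φ).get j) i := by
    rw [bmid, dif_pos hu, symm_enc φ N j i hu]
  simp only [hC, hA, hb]
  have e1 : ∑ t, xv t * (wP ((subs φ).get j) i * zvV φ N cP ((subs φ).get j) t)
      = wP ((subs φ).get j) i * ∑ t, xv t * zvV φ N cP ((subs φ).get j) t := by
    rw [Finset.mul_sum]; exact Finset.sum_congr rfl fun t _ => by ring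
  have e2 : ∑ t, xa t * (wP ((subs φ).get j) i * zvA φ N cP ((subs φ).get j) t)
      = wP ((subs φ).get j) i * ∑ t, xa t * zvA φ N cP ((subs φ).get j) t := by
    rw [Finset.mul_sum]; exact Finset.sum_congr rfl fun t _ => by ring
  rw [e1, e2]
  ring

lemma scom_mid_last (f : ℝ → ℝ) (φ : GML α) (N : ℕ) (cP wP bP : GML α → Fin N → ℝ)
    (wstar bstar : ℝ) (xv xa : Fin ((subs φ).length * N + 1) → ℝ) :
    scom f (Cmid φ N cP wP wstar) (Amid φ N cP wP) (bmid φ N bP bstar) xv xa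
        (Fin.last ((subs φ).length * N))
      = f (wstar * val φ N cP φ xv + bstar) := by
  rw [scom]
  congr 1
  have hu : ¬ ((Fin.last ((subs φ).length * N) : Fin _) : ℕ) < (subs φ).length * N := by simp
  have hC : ∀ t, Cmid φ N cP wP wstar t (Fin.last ((subs φ).length * N))
      = wstar * cvec φ N cP φ t := by
    intro t; rw [Cmid, dif_neg hu]
  have hA : ∀ t, Amid φ N cP wP t (Fin.last ((subs φ).length * N)) = 0 := by
    intro t; rw [Amid, dif_neg hu]
  have hb : bmid φ N bP bstar (Fin.last ((subs φ).length * N)) = bstar := by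
    rw [bmid, dif_neg hu]
  simp only [hC, hA, hb]
  have e1 : ∑ t, xv t * (wstar * cvec φ N cP φ t)
      = wstar * ∑ t, xv t * cvec φ N cP φ t := by
    rw [Finset.mul_sum]; exact Finset.sum_congr rfl fun t _ => by ring
  rw [e1, sum_cvec]
  simp [mul_zero, Finset.sum_const_zero]

lemma scom_zero_block (f : ℝ → ℝ) (φ : GML α) (N : ℕ) (wP bP : GML α → Fin N → ℝ)
    (bstar : ℝ) (xv xa : Fin (Fintype.card α) → ℝ)
    (j : Fin (subs φ).length) (i : Fin N) :
    scom f (C0 φ N wP) (fun _ _ => 0) (bmid φ N bP bstar) xv xa (enc φ N j i)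
      = f (wP ((subs φ).get j) i * (∑ t, xv t * zv0 ((subs φ).get j) t)
          + bP ((subs φ).get j) i) := by
  rw [scom]
  congr 1
  have hu := enc_lt φ N j i
  have hC : ∀ t, C0 φ N wP t (enc φ N j i)
      = wP ((subs φ).get j) i * zv0 ((subs φ).get j) t := by
    intro t; rw [C0, dif_pos hu, symm_enc φ N j i hu]
  have hb : bmid φ N bP bstar (enc φ N j i) = bP ((subs φ).get j) i := by
    rw [bmid, dif_pos hu, symm_enc φ N j i hu]
  simp only [hC, hb]
  have e1 : ∑ t, xv t * (wP ((subs φ).get j) i * zv0 ((subs φ).get j) t)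
      = wP ((subs φ).get j) i * ∑ t, xv t * zv0 ((subs φ).get j) t := by
    rw [Finset.mul_sum]; exact Finset.sum_congr rfl fun t _ => by ring
  rw [e1]
  simp

end Stmt6
namespace Stmt6

variable {α : Type} [Fintype α]

/-- Abbreviation for the feature map of the constructed network at layers `≥ 1`. -/
noncomputable def FT (f : ℝ → ℝ) (φ : GML α) (N : ℕ) (cP wP bP : GML α → Fin N → ℝ)
    (wstar bstar : ℝ) (G : LabeledGraph α) (ℓ : ℕ) (v : G.V) :
    Fin ((subs φ).length * N + 1) → ℝ :=
  GNN.feat (net f φ N cP wP bP wstar bstar) Agg.sum G (ℓ + 1) v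

lemma FT_zero (f : ℝ → ℝ) (φ : GML α) (N : ℕ) (cP wP bP : GML α → Fin N → ℝ)
    (wstar bstar : ℝ) (G : LabeledGraph α) (v : G.V) :
    FT f φ N cP wP bP wstar bstar G 0 v
      = scom f (C0 φ N wP) (fun _ _ => 0) (bmid φ N bP bstar)
          (fun t => if G.label v ((Fintype.equivFin α).symm t) then 1 else 0)
          (fun t => ∑ u ∈ G.nbhdFinset v,
            (if G.label u ((Fintype.equivFin α).symm t) then 1 else 0 : ℝ)) := rfl

lemma FT_succ (f : ℝ → ℝ) (φ : GML α) (N : ℕ) (cP wP bP : GML α → Fin N → ℝ)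
    (wstar bstar : ℝ) (G : LabeledGraph α) (ℓ : ℕ) (v : G.V) :
    FT f φ N cP wP bP wstar bstar G (ℓ + 1) v
      = scom f (Cmid φ N cP wP wstar) (Amid φ N cP wP) (bmid φ N bP bstar)
          (FT f φ N cP wP bP wstar bstar G ℓ v)
          (fun t => ∑ u ∈ G.nbhdFinset v, FT f φ N cP wP bP wstar bstar G ℓ u t) := rfl

lemma tgt01 (χ : GML α) (k : ℕ) : tgt χ k = 0 ∨ tgt χ k = 1 := by
  cases χ <;> dsimp [tgt] <;> split <;> simp

lemma sum01 {V : Type} (s : Finset V) (g : V → ℝ) (h : ∀ u ∈ s, g u = 0 ∨ g u = 1) :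
    ∑ u ∈ s, g u = ((s.filter (fun u => g u = 1)).card : ℝ) := by
  classical
  rw [← Finset.sum_boole]
  refine Finset.sum_congr rfl fun u hu => ?_
  rcases h u hu with h0 | h1
  · rw [h0]; norm_num
  · rw [h1]; norm_num

/-- Evaluation of a block of the first layer. -/
lemma val_FT_zero (f : ℝ → ℝ) (φ : GML α) (N : ℕ) (cP wP bP : GML α → Fin N → ℝ)
    (wstar bstar : ℝ) (G : LabeledGraph α) (v : G.V) (χ : GML α) (hχ : χ ∈ subs φ) :
    val φ N cP χ (FT f φ N cP wP bP wstar bstar G 0 v)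
      = ∑ i : Fin N, cP χ i * f (wP χ i *
          (∑ t, (if G.label v ((Fintype.equivFin α).symm t) then (1:ℝ) else 0) * zv0 χ t)
          + bP χ i) := by
  rw [val]
  refine Finset.sum_congr rfl fun i _ => ?_
  rw [FT_zero, scom_zero_block, get_jdx φ χ hχ]

/-- Evaluation of a block of a later layer. -/
lemma val_FT_succ (f : ℝ → ℝ) (φ : GML α) (N : ℕ) (cP wP bP : GML α → Fin N → ℝ)
    (wstar bstar : ℝ) (G : LabeledGraph α) (ℓ : ℕ) (v : G.V) (χ : GML α) (hχ : χ ∈ subs φ) :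
    val φ N cP χ (FT f φ N cP wP bP wstar bstar G (ℓ+1) v)
      = ∑ i : Fin N, cP χ i * f (wP χ i *
          ((∑ t, FT f φ N cP wP bP wstar bstar G ℓ v t * zvV φ N cP χ t) +
           (∑ t, (∑ u ∈ G.nbhdFinset v, FT f φ N cP wP bP wstar bstar G ℓ u t)
              * zvA φ N cP χ t))
          + bP χ i) := by
  rw [val]
  refine Finset.sum_congr rfl fun i _ => ?_
  rw [FT_succ, scom_mid_block, get_jdx φ χ hχ]

end Stmt6
namespace Stmt6

variable {α : Type} [Fintype α]

lemma val_sum (φ : GML α) (N : ℕ) (cP : GML α → Fin N → ℝ) (χ : GML α)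
    {V : Type} (s : Finset V) (F : V → Fin ((subs φ).length * N + 1) → ℝ) :
    val φ N cP χ (fun t => ∑ u ∈ s, F u t) = ∑ u ∈ s, val φ N cP χ (F u) := by
  rw [val]
  have h1 : ∀ i : Fin N, cP χ i * (∑ u ∈ s, F u (enc φ N (jdx φ χ) i))
      = ∑ u ∈ s, cP χ i * F u (enc φ N (jdx φ χ) i) := fun i => Finset.mul_sum _ _ _
  rw [Finset.sum_congr rfl fun i _ => h1 i, Finset.sum_comm]
  rfl

lemma val_invariant (f : ℝ → ℝ) (φ : GML α) (n N : ℕ) (cP wP bP : GML α → Fin N → ℝ)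
    (wstar bstar : ℝ)
    (hspec : ∀ ψ ∈ subs φ, ∀ k : ℕ, k ≤ n + 2 →
      ∑ i, cP ψ i * f (wP ψ i * (k : ℝ) + bP ψ i) = tgt ψ k)
    (G : LabeledGraph α) (hG : Fintype.card G.V ≤ n) :
    ∀ (ℓ : ℕ) (v : G.V) (χ : GML α), χ ∈ subs φ →
      (val φ N cP χ (FT f φ N cP wP bP wstar bstar G ℓ v) = 0 ∨
        val φ N cP χ (FT f φ N cP wP bP wstar bstar G ℓ v) = 1) ∧
      (ght χ ≤ ℓ → val φ N cP χ (FT f φ N cP wP bP wstar bstar G ℓ v)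
          = if GML.sat G χ v then 1 else 0) := by
  classical
  have heval0 : ∀ (v : G.V) (χ : GML α), χ ∈ subs φ → ∀ (k : ℕ), k ≤ n + 2 →
      (∑ t, (if G.label v ((Fintype.equivFin α).symm t) then (1:ℝ) else 0) * zv0 χ t) = (k : ℝ) →
      val φ N cP χ (FT f φ N cP wP bP wstar bstar G 0 v) = tgt χ k := by
    intro v χ hχ k hk hz
    rw [val_FT_zero f φ N cP wP bP wstar bstar G v χ hχ, hz]
    exact hspec χ hχ k hk
  have hevalS : ∀ (ℓ : ℕ) (v : G.V) (χ : GML α), χ ∈ subs φ → ∀ (k : ℕ), k ≤ n + 2 →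
      ((∑ t, FT f φ N cP wP bP wstar bstar G ℓ v t * zvV φ N cP χ t) +
       (∑ t, (∑ u ∈ G.nbhdFinset v, FT f φ N cP wP bP wstar bstar G ℓ u t)
          * zvA φ N cP χ t)) = (k : ℝ) →
      val φ N cP χ (FT f φ N cP wP bP wstar bstar G (ℓ+1) v) = tgt χ k := by
    intro ℓ v χ hχ k hk hz
    rw [val_FT_succ f φ N cP wP bP wstar bstar G ℓ v χ hχ, hz]
    exact hspec χ hχ k hk
  intro ℓ
  induction ℓ with
  | zero =>
      intro v χ hχ
      cases χ with
      | atom p =>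
          have hz : (∑ t, (if G.label v ((Fintype.equivFin α).symm t) then (1:ℝ) else 0)
              * zv0 (GML.atom p : GML α) t) = if G.label v p then (1:ℝ) else 0 := by
            simp only [zv0]
            rw [Finset.sum_eq_single (Fintype.equivFin α p)]
            · rw [if_pos rfl, Equiv.symm_apply_apply, mul_one]
            · intro t _ ht; rw [if_neg ht, mul_zero]
            · intro h; exact absurd (Finset.mem_univ _) h
          by_cases hl : G.label v p
          · have hv := heval0 v _ hχ 1 (by omega) (by rw [hz, if_pos hl]; norm_num)
            constructor
            · rw [hv]; exact tgt01 _ _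
            · intro _
              rw [hv]
              have hsat : GML.sat G (GML.atom p) v := hl
              rw [if_pos hsat]
              simp [tgt]
          · have hv := heval0 v _ hχ 0 (by omega) (by rw [hz, if_neg hl]; norm_num)
            constructor
            · rw [hv]; exact tgt01 _ _
            · intro _
              rw [hv]
              have hsat : ¬ GML.sat G (GML.atom p) v := hl
              rw [if_neg hsat]
              simp [tgt]
      | neg χ' =>
          have hz : (∑ t, (if G.label v ((Fintype.equivFin α).symm t) then (1:ℝ) else 0)
              * zv0 (GML.neg χ' : GML α) t) = ((0:ℕ) : ℝ) := by
            simp [zv0]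
          have hv := heval0 v _ hχ 0 (by omega) hz
          exact ⟨by rw [hv]; exact tgt01 _ _, fun hght => by simp [ght] at hght⟩
      | or χ₁ χ₂ =>
          have hz : (∑ t, (if G.label v ((Fintype.equivFin α).symm t) then (1:ℝ) else 0)
              * zv0 (GML.or χ₁ χ₂ : GML α) t) = ((0:ℕ) : ℝ) := by
            simp [zv0]
          have hv := heval0 v _ hχ 0 (by omega) hz
          exact ⟨by rw [hv]; exact tgt01 _ _, fun hght => by simp [ght] at hght⟩
      | dia n₀ χ' =>
          have hz : (∑ t, (if G.label v ((Fintype.equivFin α).symm t) then (1:ℝ) else 0)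
              * zv0 (GML.dia n₀ χ' : GML α) t) = ((0:ℕ) : ℝ) := by
            simp [zv0]
          have hv := heval0 v _ hχ 0 (by omega) hz
          exact ⟨by rw [hv]; exact tgt01 _ _, fun hght => by simp [ght] at hght⟩
  | succ ℓ ih =>
      intro v χ hχ
      cases χ with
      | atom p =>
          have hz0 : (∑ t, FT f φ N cP wP bP wstar bstar G ℓ v t
                * zvV φ N cP (GML.atom p : GML α) t)
              = val φ N cP (GML.atom p) (FT f φ N cP wP bP wstar bstar G ℓ v) := by
            simp only [zvV]; exact sum_cvec φ N cP _ _
          have hzA : (∑ t, (∑ u ∈ G.nbhdFinset v, FT f φ N cP wP bP wstar bstar G ℓ u t)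
                * zvA φ N cP (GML.atom p : GML α) t) = 0 := by
            simp [zvA]
          have hcor := (ih v (GML.atom p) hχ).2 (by simp [ght])
          by_cases hl : GML.sat G (GML.atom p) v
          · have hv := hevalS ℓ v _ hχ 1 (by omega)
              (by rw [hz0, hzA, hcor, if_pos hl]; norm_num)
            refine ⟨by rw [hv]; exact tgt01 _ _, fun _ => ?_⟩
            rw [hv, if_pos hl]; simp [tgt]
          · have hv := hevalS ℓ v _ hχ 0 (by omega)
              (by rw [hz0, hzA, hcor, if_neg hl]; norm_num)
            refine ⟨by rw [hv]; exact tgt01 _ _, fun _ => ?_⟩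
            rw [hv, if_neg hl]; simp [tgt]
      | neg χ' =>
          have hχ' : χ' ∈ subs φ := subs_neg_mem hχ
          have hz0 : (∑ t, FT f φ N cP wP bP wstar bstar G ℓ v t
                * zvV φ N cP (GML.neg χ' : GML α) t)
              = val φ N cP χ' (FT f φ N cP wP bP wstar bstar G ℓ v) := by
            simp only [zvV]; exact sum_cvec φ N cP _ _
          have hzA : (∑ t, (∑ u ∈ G.nbhdFinset v, FT f φ N cP wP bP wstar bstar G ℓ u t)
                * zvA φ N cP (GML.neg χ' : GML α) t) = 0 := by
            simp [zvA]
          constructor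
          · rcases (ih v χ' hχ').1 with h0 | h1
            · have hv := hevalS ℓ v _ hχ 0 (by omega) (by rw [hz0, hzA, h0]; norm_num)
              rw [hv]; exact tgt01 _ _
            · have hv := hevalS ℓ v _ hχ 1 (by omega) (by rw [hz0, hzA, h1]; norm_num)
              rw [hv]; exact tgt01 _ _
          · intro hght
            have hght' : ght χ' ≤ ℓ := by simp [ght] at hght; omega
            have hcor := (ih v χ' hχ').2 hght'
            by_cases hs : GML.sat G χ' v
            · have hv := hevalS ℓ v _ hχ 1 (by omega)
                (by rw [hz0, hzA, hcor, if_pos hs]; norm_num)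
              rw [hv]
              have : ¬ GML.sat G (GML.neg χ') v := fun hc => hc hs
              rw [if_neg this]; simp [tgt]
            · have hv := hevalS ℓ v _ hχ 0 (by omega)
                (by rw [hz0, hzA, hcor, if_neg hs]; norm_num)
              rw [hv]
              have : GML.sat G (GML.neg χ') v := hs
              rw [if_pos this]; simp [tgt]
      | or χ₁ χ₂ =>
          have hχ₁ : χ₁ ∈ subs φ := (subs_or_mem hχ).1
          have hχ₂ : χ₂ ∈ subs φ := (subs_or_mem hχ).2
          have hz0 : (∑ t, FT f φ N cP wP bP wstar bstar G ℓ v t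
                * zvV φ N cP (GML.or χ₁ χ₂ : GML α) t)
              = val φ N cP χ₁ (FT f φ N cP wP bP wstar bstar G ℓ v)
                + val φ N cP χ₂ (FT f φ N cP wP bP wstar bstar G ℓ v) := by
            simp only [zvV]
            rw [← sum_cvec φ N cP χ₁ _, ← sum_cvec φ N cP χ₂ _, ← Finset.sum_add_distrib]
            exact Finset.sum_congr rfl fun t _ => by ring
          have hzA : (∑ t, (∑ u ∈ G.nbhdFinset v, FT f φ N cP wP bP wstar bstar G ℓ u t)
                * zvA φ N cP (GML.or χ₁ χ₂ : GML α) t) = 0 := by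
            simp [zvA]
          constructor
          · rcases (ih v χ₁ hχ₁).1 with h1 | h1 <;> rcases (ih v χ₂ hχ₂).1 with h2 | h2
            · have hv := hevalS ℓ v _ hχ 0 (by omega) (by rw [hz0, hzA, h1, h2]; norm_num)
              rw [hv]; exact tgt01 _ _
            · have hv := hevalS ℓ v _ hχ 1 (by omega) (by rw [hz0, hzA, h1, h2]; norm_num)
              rw [hv]; exact tgt01 _ _
            · have hv := hevalS ℓ v _ hχ 1 (by omega) (by rw [hz0, hzA, h1, h2]; norm_num)
              rw [hv]; exact tgt01 _ _
            · have hv := hevalS ℓ v _ hχ 2 (by omega) (by rw [hz0, hzA, h1, h2]; norm_num)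
              rw [hv]; exact tgt01 _ _
          · intro hght
            have hght1 : ght χ₁ ≤ ℓ := by simp [ght] at hght; omega
            have hght2 : ght χ₂ ≤ ℓ := by simp [ght] at hght; omega
            have hc1 := (ih v χ₁ hχ₁).2 hght1
            have hc2 := (ih v χ₂ hχ₂).2 hght2
            have hsat : GML.sat G (GML.or χ₁ χ₂) v ↔ GML.sat G χ₁ v ∨ GML.sat G χ₂ v :=
              Iff.rfl
            by_cases hs1 : GML.sat G χ₁ v <;> by_cases hs2 : GML.sat G χ₂ v
            · have hv := hevalS ℓ v _ hχ 2 (by omega)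
                (by rw [hz0, hzA, hc1, hc2, if_pos hs1, if_pos hs2]; norm_num)
              rw [hv, if_pos (hsat.2 (Or.inl hs1))]; simp [tgt]
            · have hv := hevalS ℓ v _ hχ 1 (by omega)
                (by rw [hz0, hzA, hc1, hc2, if_pos hs1, if_neg hs2]; norm_num)
              rw [hv, if_pos (hsat.2 (Or.inl hs1))]; simp [tgt]
            · have hv := hevalS ℓ v _ hχ 1 (by omega)
                (by rw [hz0, hzA, hc1, hc2, if_neg hs1, if_pos hs2]; norm_num)
              rw [hv, if_pos (hsat.2 (Or.inr hs2))]; simp [tgt]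
            · have hv := hevalS ℓ v _ hχ 0 (by omega)
                (by rw [hz0, hzA, hc1, hc2, if_neg hs1, if_neg hs2]; norm_num)
              have : ¬ GML.sat G (GML.or χ₁ χ₂) v := fun hc => by
                rcases hsat.1 hc with h | h
                · exact hs1 h
                · exact hs2 h
              rw [hv, if_neg this]; simp [tgt]
      | dia n₀ χ' =>
          have hχ' : χ' ∈ subs φ := subs_dia_mem hχ
          have hz0 : (∑ t, FT f φ N cP wP bP wstar bstar G ℓ v t
                * zvV φ N cP (GML.dia n₀ χ' : GML α) t) = 0 := by
            simp [zvV]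
          have hzA : (∑ t, (∑ u ∈ G.nbhdFinset v, FT f φ N cP wP bP wstar bstar G ℓ u t)
                * zvA φ N cP (GML.dia n₀ χ' : GML α) t)
              = ∑ u ∈ G.nbhdFinset v, val φ N cP χ' (FT f φ N cP wP bP wstar bstar G ℓ u) := by
            simp only [zvA]
            rw [sum_cvec φ N cP χ' _]
            exact val_sum φ N cP χ' _ _
          set k : ℕ := ((G.nbhdFinset v).filter
            (fun u => val φ N cP χ' (FT f φ N cP wP bP wstar bstar G ℓ u) = 1)).card with hk
          have hksum : ∑ u ∈ G.nbhdFinset v, val φ N cP χ' (FT f φ N cP wP bP wstar bstar G ℓ u)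
              = (k : ℝ) := by
            rw [hk]
            exact sum01 _ _ fun u _ => (ih u χ' hχ').1
          have hkle : k ≤ n + 2 := by
            have h1 : k ≤ (G.nbhdFinset v).card := Finset.card_filter_le _ _
            have h2 : (G.nbhdFinset v).card ≤ Fintype.card G.V := Finset.card_le_univ _
            omega
          have hv := hevalS ℓ v _ hχ k hkle (by rw [hz0, hzA, hksum]; ring)
          refine ⟨by rw [hv]; exact tgt01 _ _, fun hght => ?_⟩
          have hght' : ght χ' ≤ ℓ := by simp [ght] at hght; omega
          have hfe : ((G.nbhdFinset v).filter
                (fun u => val φ N cP χ' (FT f φ N cP wP bP wstar bstar G ℓ u) = 1))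
              = (G.nbhdFinset v).filter (fun u => GML.sat G χ' u) := by
            refine Finset.filter_congr fun u _ => ?_
            rw [(ih u χ' hχ').2 hght']
            by_cases hs : GML.sat G χ' u
            · simp [hs]
            · simp [hs]
          have hncard : {u | G.adj v u ∧ GML.sat G χ' u}.ncard
              = ((G.nbhdFinset v).filter (fun u => GML.sat G χ' u)).card := by
            have hset : {u | G.adj v u ∧ GML.sat G χ' u}
                = ↑((G.nbhdFinset v).filter (fun u => GML.sat G χ' u)) := by
              ext u
              simp [LabeledGraph.nbhdFinset]
            rw [hset, Set.ncard_coe_finset]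
          have hiff : GML.sat G (GML.dia n₀ χ') v ↔ n₀ ≤ k := by
            show n₀ ≤ {u | G.adj v u ∧ GML.sat G χ' u}.ncard ↔ n₀ ≤ k
            rw [hncard, hk, hfe]
          rw [hv]
          by_cases hs : GML.sat G (GML.dia n₀ χ') v
          · rw [if_pos hs]
            have := hiff.1 hs
            simp [tgt, this]
          · rw [if_neg hs]
            have : ¬ n₀ ≤ k := fun hc => hs (hiff.2 hc)
            simp [tgt, this]

end Stmt6
namespace Stmt6

variable {α : Type} [Fintype α]

lemma net_correct (f : ℝ → ℝ) (φ : GML α) (n N : ℕ) (cP wP bP : GML α → Fin N → ℝ)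
    (wstar bstar : ℝ) (hstar : f bstar < f (wstar + bstar))
    (hspec : ∀ ψ ∈ subs φ, ∀ k : ℕ, k ≤ n + 2 →
      ∑ i, cP ψ i * f (wP ψ i * (k : ℝ) + bP ψ i) = tgt ψ k)
    (G : LabeledGraph α) (hG : Fintype.card G.V ≤ n) (v : G.V) :
    (net f φ N cP wP bP wstar bstar).accepts Agg.sum G v ↔ GML.sat G φ v := by
  classical
  have hout : GNN.feat (net f φ N cP wP bP wstar bstar) Agg.sum G
      (net f φ N cP wP bP wstar bstar).L v (net f φ N cP wP bP wstar bstar).clsIdx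
      = f (wstar * (if GML.sat G φ v then 1 else 0) + bstar) := by
    have h1 : GNN.feat (net f φ N cP wP bP wstar bstar) Agg.sum G
        (net f φ N cP wP bP wstar bstar).L v (net f φ N cP wP bP wstar bstar).clsIdx
        = scom f (Cmid φ N cP wP wstar) (Amid φ N cP wP) (bmid φ N bP bstar)
            (FT f φ N cP wP bP wstar bstar G (ght φ) v)
            (fun t => ∑ u ∈ G.nbhdFinset v, FT f φ N cP wP bP wstar bstar G (ght φ) u t)
            (Fin.last ((subs φ).length * N)) := rfl
    rw [h1, scom_mid_last,
      (val_invariant f φ n N cP wP bP wstar bstar hspec G hG (ght φ) v φ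
        (self_mem_subs φ)).2 le_rfl]
  have hcs : (net f φ N cP wP bP wstar bstar).clsStrict = false := rfl
  have hthr : (net f φ N cP wP bP wstar bstar).clsThr
      = (f bstar + f (wstar + bstar)) / 2 := rfl
  rw [GNN.accepts, hcs, hthr, if_neg (by simp), hout]
  by_cases hs : GML.sat G φ v
  · rw [if_pos hs]
    have he : wstar * 1 + bstar = wstar + bstar := by ring
    rw [he]
    constructor
    · intro _; exact hs
    · intro _; linarith
  · rw [if_neg hs]
    have he : wstar * 0 + bstar = bstar := by ring
    rw [he]
    constructor
    · intro h; exfalso; linarith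
    · intro h; exact absurd h hs

end Stmt6

/-- Let f be continuous and not a polynomial function. For every GML
formula φ and every n ≥ 1, there exists a simple Sum-GNN with activation f that
accepts a pointed graph with at most n vertices iff the graph satisfies φ. -/
theorem stmt6 {α : Type} [Fintype α] (f : ℝ → ℝ) (hf : Continuous f)
    (hnp : ¬ ∃ p : Polynomial ℝ, ∀ x, f x = p.eval x)
    (φ : GML α) (n : ℕ) (hn : 1 ≤ n) :
    ∃ 𝒢 : GNN α, 𝒢.IsSimple f ∧
      ∀ (G : LabeledGraph α) (v : G.V), Fintype.card G.V ≤ n →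
        (𝒢.accepts Agg.sum G v ↔ GML.sat G φ v) := by
  classical
  have hnc : ∃ u v : ℝ, f u < f v := by
    by_contra hc
    push_neg at hc
    apply hnp
    refine ⟨Polynomial.C (f 0), fun x => ?_⟩
    have h1 := hc x 0
    have h2 := hc 0 x
    rw [Polynomial.eval_C]
    linarith
  obtain ⟨u0, v0, huv⟩ := hnc
  have hstar : f u0 < f ((v0 - u0) + u0) := by
    have he : v0 - u0 + u0 = v0 := by ring
    rw [he]; exact huv
  have hex : ∀ ψ : GML α, ∃ (Nψ : ℕ) (c w b : Fin Nψ → ℝ),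
      ∀ k : ℕ, k ≤ n + 2 → ∑ i, c i * f (w i * (k : ℝ) + b i) = Stmt6.tgt ψ k := by
    intro ψ
    obtain ⟨N, c, w, b, h⟩ := key_interp hf hnp (n + 3)
      (fun j : Fin (n + 3) => ((j : ℕ) : ℝ))
      (fun a b hab => Fin.ext (by simpa using hab))
      (fun j => Stmt6.tgt ψ (j : ℕ))
    refine ⟨N, c, w, b, fun k hk => ?_⟩
    have := h ⟨k, by omega⟩
    simpa using this
  choose NF cF wF bF hF using hex
  set Ntot := ((Stmt6.subs φ).toFinset.sup NF) with hNtot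
  set cP : GML α → Fin Ntot → ℝ :=
    fun ψ i => if h : (i : ℕ) < NF ψ then cF ψ ⟨i, h⟩ else 0 with hcP
  set wP : GML α → Fin Ntot → ℝ :=
    fun ψ i => if h : (i : ℕ) < NF ψ then wF ψ ⟨i, h⟩ else 0 with hwP
  set bP : GML α → Fin Ntot → ℝ :=
    fun ψ i => if h : (i : ℕ) < NF ψ then bF ψ ⟨i, h⟩ else 0 with hbP
  have hpad : ∀ ψ ∈ Stmt6.subs φ, ∀ k : ℕ, k ≤ n + 2 →
      ∑ i, cP ψ i * f (wP ψ i * (k : ℝ) + bP ψ i) = Stmt6.tgt ψ k := by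
    intro ψ hψ k hk
    have hle : NF ψ ≤ Ntot := Finset.le_sup (List.mem_toFinset.2 hψ)
    rw [← hF ψ k hk]
    have hterm : ∀ i : Fin Ntot, cP ψ i * f (wP ψ i * (k : ℝ) + bP ψ i)
        = (fun j : ℕ => if hj : j < NF ψ then
            cF ψ ⟨j, hj⟩ * f (wF ψ ⟨j, hj⟩ * (k : ℝ) + bF ψ ⟨j, hj⟩) else 0) (i : ℕ) := by
      intro i
      by_cases hi : (i : ℕ) < NF ψ
      · simp only [hcP, hwP, hbP, dif_pos hi]
      · simp only [hcP, hwP, hbP, dif_neg hi]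
        simp
    rw [Finset.sum_congr rfl fun i _ => hterm i]
    rw [Fin.sum_univ_eq_sum_range (fun j : ℕ => if hj : j < NF ψ then
        cF ψ ⟨j, hj⟩ * f (wF ψ ⟨j, hj⟩ * (k : ℝ) + bF ψ ⟨j, hj⟩) else 0) Ntot]
    rw [← Finset.sum_subset (Finset.range_subset_range.2 hle)
      (fun x _ hx => by rw [dif_neg (by simpa using hx)])]
    rw [← Fin.sum_univ_eq_sum_range (fun j : ℕ => if hj : j < NF ψ then
        cF ψ ⟨j, hj⟩ * f (wF ψ ⟨j, hj⟩ * (k : ℝ) + bF ψ ⟨j, hj⟩) else 0) (NF ψ)]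
    refine Finset.sum_congr rfl fun i _ => ?_
    rw [dif_pos i.isLt]
  refine ⟨Stmt6.net f φ Ntot cP wP bP (v0 - u0) u0,
    Stmt6.net_isSimple f φ Ntot cP wP bP (v0 - u0) u0, fun G v hG => ?_⟩
  exact Stmt6.net_correct f φ n Ntot cP wP bP (v0 - u0) u0 hstar hpad G hG v
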